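/- The pre-processed improvement is monotone under left composition with free channels: for every channel Θ and every detection incoherent channel Θ_DI, M_{λ,φ}(Θ_DI ∘ Θ) ≤ M_{λ,φ}(Θ). -/

import Mathlib

open Matrix Complex
open scoped ComplexOrder

/-- A superoperator: a ℂ-linear map from operators on `ι` to operators on `κ`. -/
abbrev SO (ι κ : Type*) [Fintype ι] [DecidableEq ι] [Fintype κ] [DecidableEq κ] :=
  Matrix ι ι ℂ →ₗ[ℂ] Matrix κ κ ℂ

/-- Choi matrix of a superoperator. -/
noncomputable def choi {ι κ : Type*} [Fintype ι] [DecidableEq ι] [Fintype κ] [DecidableEq κ]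
    (Θ : SO ι κ) : Matrix (κ × ι) (κ × ι) ℂ :=
  Matrix.of fun p q => Θ (Matrix.single p.2 q.2 1) p.1 q.1

/-- A quantum state: positive semidefinite with unit trace. -/
def IsState {ι : Type*} [Fintype ι] (ρ : Matrix ι ι ℂ) : Prop := ρ.PosSemidef ∧ ρ.trace = 1

/-- A quantum channel: completely positive (PSD Choi matrix) and trace preserving. -/
def IsChannel {ι κ : Type*} [Fintype ι] [DecidableEq ι] [Fintype κ] [DecidableEq κ]
    (Θ : SO ι κ) : Prop :=
  (choi Θ).PosSemidef ∧ ∀ ρ, (Θ ρ).trace = ρ.trace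

/-- Total dephasing channel in the fixed incoherent basis. -/
noncomputable def deph {ι : Type*} [Fintype ι] [DecidableEq ι] : SO ι ι where
  toFun ρ := Matrix.of fun i j => if i = j then ρ i j else 0
  map_add' := by
    intro x y; ext i j
    by_cases h : i = j <;> simp [h]
  map_smul' := by
    intro c x; ext i j
    by_cases h : i = j <;> simp [h]

/-- Phase-encoding unitary channel `Λ_φ`. -/
noncomputable def phaseCh {ι : Type*} [Fintype ι] [DecidableEq ι] (φ : ι → ℝ) : SO ι ι where
  toFun ρ := Matrix.of fun i j => Complex.exp (Complex.I * ((φ i : ℂ) - (φ j : ℂ))) * ρ i j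
  map_add' := by
    intro x y; ext i j; simp [mul_add]
  map_smul' := by
    intro c x; ext i j; simp; ring

/-- The superoperator `λ·id − (1−λ)·Λ_φ`. -/
noncomputable def diffOp {ι : Type*} [Fintype ι] [DecidableEq ι] (lam : ℝ) (φ : ι → ℝ) :
    SO ι ι :=
  (lam : ℂ) • LinearMap.id - ((1 - lam : ℝ) : ℂ) • phaseCh φ

/-- Trace norm of a matrix: sum of singular values. -/
noncomputable def traceNorm {ι : Type*} [Fintype ι] [DecidableEq ι]
    (M : Matrix ι ι ℂ) : ℝ :=
  ∑ i, Real.sqrt ((Matrix.isHermitian_conjTranspose_mul_self M).eigenvalues i)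

/-- `Θ ⊗ id` acting on a composite system. -/
noncomputable def tensorId {ι κ ν : Type*} [Fintype ι] [DecidableEq ι] [Fintype κ]
    [DecidableEq κ] [Fintype ν] [DecidableEq ν] (Θ : SO ι κ) : SO (ι × ν) (κ × ν) where
  toFun ρ := Matrix.of fun p q =>
    ∑ i, ∑ j, Θ (Matrix.single i j 1) p.1 q.1 * ρ (i, p.2) (j, q.2)
  map_add' := by
    intro x y; ext p q
    simp [Matrix.add_apply, mul_add, Finset.sum_add_distrib]
  map_smul' := by
    intro c x; ext p q
    simp only [Matrix.of_apply, Matrix.smul_apply, smul_eq_mul, RingHom.id_apply,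
      Finset.mul_sum]
    exact Finset.sum_congr rfl fun i _ => Finset.sum_congr rfl fun j _ => by ring

/-- Detection incoherent channels: `Δ Φ = Δ Φ Δ`. -/
def IsDI {ι κ : Type*} [Fintype ι] [DecidableEq ι] [Fintype κ] [DecidableEq κ]
    (Φ : SO ι κ) : Prop :=
  deph ∘ₗ Φ = deph ∘ₗ Φ ∘ₗ deph

/-- Maximally incoherent channels: `Ψ Δ = Δ Ψ Δ`. -/
def IsMIO {ι κ : Type*} [Fintype ι] [DecidableEq ι] [Fintype κ] [DecidableEq κ]
    (Ψ : SO ι κ) : Prop :=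
  Ψ ∘ₗ deph = deph ∘ₗ Ψ ∘ₗ deph

/-- The pre-processed improvement `M_{λ,φ}(Θ)`. -/
noncomputable def Mpre {α β γ : Type*} [Fintype α] [DecidableEq α] [Fintype β] [DecidableEq β]
    [Fintype γ] [DecidableEq γ] (lam : ℝ) (φ : α → ℝ) (Θ : SO β γ) : ℝ :=
  sSup {x : ℝ | ∃ (Φ : SO α β) (ρ : Matrix α α ℂ), IsChannel Φ ∧ IsDI Φ ∧ IsState ρ ∧
    x = traceNorm (deph (Θ (Φ (diffOp lam φ ρ))))} - |lam - (1 - lam)|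

/-- The post-processed improvement `N_{λ,φ}(Θ)`. -/
noncomputable def Npost {α β γ : Type*} [Fintype α] [DecidableEq α] [Fintype β] [DecidableEq β]
    [Fintype γ] [DecidableEq γ] (lam : ℝ) (φ : γ → ℝ) (Θ : SO α β) : ℝ :=
  sSup {x : ℝ | ∃ (Ψ : SO β γ) (ρ : Matrix α α ℂ), IsChannel Ψ ∧ IsMIO Ψ ∧ IsState ρ ∧
    x = traceNorm (diffOp lam φ (Ψ (Θ (deph ρ))))} - |lam - (1 - lam)|


section Aux
open Polynomial

theorem charpoly_diagonal' {n : Type*} [Fintype n] [DecidableEq n] (d : n → ℂ) :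
    (Matrix.diagonal d).charpoly = ∏ i, (X - C (d i)) := by
  unfold Matrix.charpoly charmatrix
  have h1 : (Matrix.diagonal d).map (Polynomial.C (R := ℂ))
      = Matrix.diagonal (fun i => C (d i)) :=
    Matrix.diagonal_map (map_zero C)
  have h2 : (Matrix.scalar n) (X : ℂ[X]) = Matrix.diagonal (fun _ => (X : ℂ[X])) := rfl
  rw [RingHom.mapMatrix_apply, h1, h2, Matrix.diagonal_sub, Matrix.det_diagonal]

theorem charpoly_unitary_conj {n : Type*} [Fintype n] [DecidableEq n]
    (U A : Matrix n n ℂ) (hU : U ∈ Matrix.unitaryGroup n ℂ) :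
    (U * A * star U).charpoly = A.charpoly := by
  have h1 : star U * U = 1 := hU.1
  have h2 : U * star U = 1 := hU.2
  unfold Matrix.charpoly
  have hsc : (Matrix.scalar n) (X : ℂ[X]) = Matrix.diagonal (fun _ => (X : ℂ[X])) := rfl
  have hcomm : U.map C * Matrix.diagonal (fun _ => (X:ℂ[X]))
      = Matrix.diagonal (fun _ => (X:ℂ[X])) * U.map C := by
    ext i j
    rw [Matrix.mul_diagonal, Matrix.diagonal_mul, mul_comm]
  have key : charmatrix (U * A * star U)
      = (U.map C) * charmatrix A * ((star U).map C) := by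
    unfold charmatrix
    rw [Matrix.mul_sub, Matrix.sub_mul, hsc]
    congr 1
    · rw [hcomm, Matrix.mul_assoc, ← Matrix.map_mul, h2]
      simp
    · simp [RingHom.mapMatrix_apply, Matrix.map_mul]
  rw [key, Matrix.det_mul, Matrix.det_mul]
  have h3 : (U.map C).det * ((star U).map C).det = 1 := by
    rw [mul_comm, ← Matrix.det_mul, ← Matrix.map_mul, h1]
    simp
  calc (U.map C).det * (charmatrix A).det * ((star U).map C).det
      = (charmatrix A).det * ((U.map C).det * ((star U).map C).det) := by ring
    _ = (charmatrix A).det := by rw [h3, mul_one]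

theorem roots_charpoly_hermitian {n : Type*} [Fintype n] [DecidableEq n]
    {A : Matrix n n ℂ} (hA : A.IsHermitian) :
    A.charpoly.roots = Finset.univ.val.map (fun i => (hA.eigenvalues i : ℂ)) := by
  have hsp := hA.spectral_theorem
  have hU := (hA.eigenvectorUnitary).2
  calc A.charpoly.roots
      = ((hA.eigenvectorUnitary : Matrix n n ℂ) *
          Matrix.diagonal (RCLike.ofReal ∘ hA.eigenvalues) *
          star (hA.eigenvectorUnitary : Matrix n n ℂ)).charpoly.roots := by
            conv_lhs => rw [hsp]
            simp only [Unitary.conjStarAlgAut_apply]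
    _ = (Matrix.diagonal (RCLike.ofReal ∘ hA.eigenvalues) : Matrix n n ℂ).charpoly.roots := by
        rw [charpoly_unitary_conj _ _ hU]
    _ = Finset.univ.val.map (fun i => (hA.eigenvalues i : ℂ)) := by
        rw [charpoly_diagonal']
        have h : ((Finset.univ.val.map (fun i : n => ((hA.eigenvalues i : ℝ) : ℂ))).map
            (fun a => X - C a)).prod = ∏ i, (X - C ((RCLike.ofReal ∘ hA.eigenvalues) i)) := by
          rw [Multiset.map_map]; rfl
        rw [← h, Polynomial.roots_multiset_prod_X_sub_C]

theorem sum_sqrt_eigenvalues_diagonal {n : Type*} [Fintype n] [DecidableEq n]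
    (a : n → ℝ) {A : Matrix n n ℂ} (hAe : A = Matrix.diagonal (fun i => (a i : ℂ)))
    (hA : A.IsHermitian) :
    ∑ i, Real.sqrt (hA.eigenvalues i) = ∑ i, Real.sqrt (a i) := by
  have hroots : A.charpoly.roots = Finset.univ.val.map (fun i => (hA.eigenvalues i : ℂ)) :=
    roots_charpoly_hermitian hA
  have hroots2 : A.charpoly.roots = Finset.univ.val.map (fun i => (a i : ℂ)) := by
    rw [hAe, charpoly_diagonal']
    have h : ((Finset.univ.val.map (fun i : n => ((a i : ℝ) : ℂ))).map
        (fun z => X - C z)).prod = ∏ i, (X - C ((a i : ℂ))) := by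
      rw [Multiset.map_map]; rfl
    rw [← h, Polynomial.roots_multiset_prod_X_sub_C]
  have hme : Finset.univ.val.map (fun i => (hA.eigenvalues i : ℂ))
      = Finset.univ.val.map (fun i => (a i : ℂ)) := by rw [← hroots, hroots2]
  have h1 := congrArg (Multiset.map (fun z : ℂ => Real.sqrt z.re)) hme
  rw [Multiset.map_map, Multiset.map_map] at h1
  have h2 := congrArg Multiset.sum h1
  simp only [Function.comp_def, Complex.ofReal_re] at h2
  exact h2

theorem deph_diag {ι : Type*} [Fintype ι] [DecidableEq ι] (N : Matrix ι ι ℂ) :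
    deph N = Matrix.diagonal (fun i => N i i) := by
  ext i j
  by_cases h : i = j <;> simp [deph, Matrix.diagonal_apply, h]

theorem traceNorm_deph {ι : Type*} [Fintype ι] [DecidableEq ι] (N : Matrix ι ι ℂ) :
    traceNorm (deph N) = ∑ i, ‖N i i‖ := by
  unfold traceNorm
  have hAe : (deph N)ᴴ * (deph N)
      = Matrix.diagonal (fun i => (((‖N i i‖)^2 : ℝ) : ℂ)) := by
    rw [deph_diag, Matrix.diagonal_conjTranspose, Matrix.diagonal_mul_diagonal]
    apply congrArg Matrix.diagonal
    funext i
    simp only [Pi.star_apply, RCLike.star_def]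
    rw [mul_comm, Complex.mul_conj, Complex.normSq_eq_norm_sq]
  rw [sum_sqrt_eigenvalues_diagonal (fun i => (‖N i i‖)^2) hAe]
  apply Finset.sum_congr rfl
  intro i _
  exact Real.sqrt_sq (norm_nonneg _)

theorem cnonneg_iff {z : ℂ} : 0 ≤ z ↔ 0 ≤ z.re ∧ z.im = 0 := by
  rw [Complex.le_def]; simp [eq_comm]

theorem abs_eq_re_of_nonneg {z : ℂ} (h : 0 ≤ z) : ‖z‖ = z.re := by
  obtain ⟨h1, h2⟩ := cnonneg_iff.1 h
  have hz : z = (z.re : ℂ) := Complex.ext rfl (by simp [h2])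
  rw [hz, Complex.norm_real, Real.norm_eq_abs, _root_.abs_of_nonneg h1, Complex.ofReal_re]

theorem psd_diag_nonneg {n : Type*} [Fintype n] [DecidableEq n]
    {A : Matrix n n ℂ} (hA : A.PosSemidef) (i : n) : 0 ≤ A i i := by
  exact hA.diag_nonneg

theorem psd_abs_le {n : Type*} [Fintype n] [DecidableEq n]
    {A : Matrix n n ℂ} (hA : A.PosSemidef) (p q : n) :
    ‖A p q‖ ≤ ((A p p).re + (A q q).re) / 2 := by
  by_cases hpq : p = q
  · subst hpq
    have h0 := psd_diag_nonneg hA p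
    rw [abs_eq_re_of_nonneg h0]
    linarith [(cnonneg_iff.1 h0).1]
  by_cases h0 : A p q = 0
  · rw [h0]
    simp only [norm_zero]
    linarith [(cnonneg_iff.1 (psd_diag_nonneg hA p)).1, (cnonneg_iff.1 (psd_diag_nonneg hA q)).1]
  · set c : ℂ := -(starRingEnd ℂ) (A p q) / ‖A p q‖ with hc
    set x : n → ℂ := fun r => (if r = p then 1 else 0) + (if r = q then c else 0) with hx
    have h := hA.dotProduct_mulVec_nonneg x
    have hAqp : A q p = (starRingEnd ℂ) (A p q) := by
      conv_lhs => rw [hA.1.symm]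
      rfl
    have hval : dotProduct (star x) (A *ᵥ x)
        = A p p + c * A q q * (starRingEnd ℂ) c + (A p q * c + (starRingEnd ℂ) c * A q p) := by
      simp only [dotProduct, Matrix.mulVec, hx, Pi.star_apply, star_add, mul_add,
        add_mul, Finset.sum_add_distrib, ite_mul, mul_ite, mul_one, mul_zero, zero_mul,
        one_mul]
      simp only [Finset.sum_ite_eq', Finset.mem_univ, if_true, apply_ite (star : ℂ → ℂ),
        star_zero, star_one, ite_mul, one_mul, zero_mul, mul_ite, mul_zero,
        Finset.sum_ite_eq', if_true]
      rw [RCLike.star_def]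
      ring_nf
    have habs2 : (‖A p q‖ : ℝ) ≠ 0 := by simpa using h0
    have hApqc : A p q * c = -((‖A p q‖ : ℝ) : ℂ) := by
      rw [hc, mul_div_assoc', mul_neg, Complex.mul_conj, neg_div]
      rw [Complex.normSq_eq_norm_sq]
      push_cast
      rw [pow_two, mul_div_assoc, div_self (by exact_mod_cast habs2), mul_one]
    have hcc : c * (starRingEnd ℂ) c = 1 := by
      rw [Complex.mul_conj, Complex.normSq_eq_norm_sq]
      rw [hc]
      simp only [norm_div, norm_neg, Complex.norm_conj,
        Complex.norm_real, Real.norm_eq_abs, _root_.abs_of_nonneg (norm_nonneg (A p q))]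
      rw [div_self habs2]
      norm_num
    have hconj : (starRingEnd ℂ) c * A q p = -((‖A p q‖ : ℝ) : ℂ) := by
      have : (starRingEnd ℂ) c * A q p = (starRingEnd ℂ) (A p q * c) := by
        rw [_root_.map_mul, hAqp]; ring
      rw [this, hApqc]
      simp
    rw [hval] at h
    have hre := (cnonneg_iff.1 h).1
    rw [hApqc, hconj] at hre
    have h1 : (A p p + c * A q q * (starRingEnd ℂ) c +
        (-((‖A p q‖ : ℝ) : ℂ) + -((‖A p q‖ : ℝ) : ℂ)))
        = A p p + A q q - 2 * ((‖A p q‖ : ℝ) : ℂ) := by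
      rw [mul_comm c (A q q), mul_assoc, hcc, mul_one]
      ring
    rw [h1] at hre
    simp only [Complex.sub_re, Complex.add_re, Complex.mul_re, Complex.ofReal_re,
      Complex.ofReal_im] at hre
    norm_num at hre
    linarith

theorem deph_eq_sum {ι : Type*} [Fintype ι] [DecidableEq ι] (M : Matrix ι ι ℂ) :
    deph M = ∑ j, M j j • Matrix.single j j 1 := by
  ext i k
  rw [Matrix.sum_apply]
  by_cases h : i = k
  · subst h
    rw [Finset.sum_eq_single i]
    · simp [deph, Matrix.single]
    · intro b _ hb; simp [Matrix.single, hb, Matrix.smul_apply]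
    · simp
  · rw [Finset.sum_eq_zero]
    · simp [deph, h]
    · intro b _
      simp only [Matrix.smul_apply, Matrix.single, Matrix.of_apply, smul_eq_mul]
      rw [if_neg (by rintro ⟨rfl, rfl⟩; exact h rfl), mul_zero]

theorem chan_expand {m k : Type*} [Fintype m] [DecidableEq m] [Fintype k] [DecidableEq k]
    (Ψ : SO m k) (X : Matrix m m ℂ) (p q : k) :
    (Ψ X) p q = ∑ j, ∑ l, X j l * (Ψ (Matrix.single j l 1)) p q := by
  conv_lhs => rw [Matrix.matrix_eq_sum_single X]
  rw [map_sum, Matrix.sum_apply]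
  apply Finset.sum_congr rfl
  intro j _
  rw [map_sum, Matrix.sum_apply]
  apply Finset.sum_congr rfl
  intro l _
  have h : Matrix.single j l (X j l) = X j l • Matrix.single j l 1 := by
    rw [Matrix.smul_single, smul_eq_mul, mul_one]
  rw [h, _root_.map_smul, Matrix.smul_apply, smul_eq_mul]

theorem choi_diag_nonneg {m k : Type*} [Fintype m] [DecidableEq m] [Fintype k] [DecidableEq k]
    {Ψ : SO m k} (hch : IsChannel Ψ) (i : k) (j : m) :
    0 ≤ (Ψ (Matrix.single j j 1)) i i :=
  psd_diag_nonneg hch.1 (i, j)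

theorem choi_abs_le {m k : Type*} [Fintype m] [DecidableEq m] [Fintype k] [DecidableEq k]
    {Ψ : SO m k} (hch : IsChannel Ψ) (j l : m) (p q : k) :
    ‖(Ψ (Matrix.single j l 1)) p q‖
      ≤ (((Ψ (Matrix.single j j 1)) p p).re
        + ((Ψ (Matrix.single l l 1)) q q).re) / 2 :=
  psd_abs_le hch.1 (p, j) (q, l)

theorem choi_diag_sum {m k : Type*} [Fintype m] [DecidableEq m] [Fintype k] [DecidableEq k]
    {Ψ : SO m k} (hch : IsChannel Ψ) (j : m) :
    ∑ i, ((Ψ (Matrix.single j j 1)) i i).re = 1 := by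
  have htr := hch.2 (Matrix.single j j 1)
  have h1 : (Matrix.single j j (1:ℂ)).trace = 1 := by
    simp [Matrix.trace, Matrix.diag, Matrix.single, Finset.sum_ite_eq]
  rw [h1] at htr
  have h2 := congrArg Complex.re htr
  rw [Matrix.trace] at h2
  simpa [Matrix.diag, Complex.re_sum] using h2


theorem deph_apply_diag {ι : Type*} [Fintype ι] [DecidableEq ι] (X : Matrix ι ι ℂ) (i : ι) :
    (deph X) i i = X i i := by
  simp [deph]

theorem diag_contraction {m k : Type*} [Fintype m] [DecidableEq m] [Fintype k] [DecidableEq k]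
    {ΘDI : SO m k} (hch : IsChannel ΘDI) (hDI : IsDI ΘDI) (M : Matrix m m ℂ) :
    ∑ i, ‖(ΘDI M) i i‖ ≤ ∑ j, ‖M j j‖ := by
  have hdi : ∀ i, (ΘDI M) i i = (ΘDI (deph M)) i i := by
    intro i
    have h := congrArg (fun f : SO m k => (f M) i i) hDI
    simp only [LinearMap.comp_apply] at h
    rw [deph_apply_diag, deph_apply_diag] at h
    exact h
  have hexp : ∀ i, (ΘDI (deph M)) i i
      = ∑ j, M j j * (ΘDI (Matrix.single j j 1)) i i := by
    intro i
    rw [deph_eq_sum M, map_sum, Matrix.sum_apply]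
    apply Finset.sum_congr rfl
    intro j _
    rw [_root_.map_smul, Matrix.smul_apply, smul_eq_mul]
  calc ∑ i, ‖(ΘDI M) i i‖
      = ∑ i, ‖∑ j, M j j * (ΘDI (Matrix.single j j 1)) i i‖ := by
        apply Finset.sum_congr rfl; intro i _; rw [hdi, hexp]
    _ ≤ ∑ i, ∑ j, ‖M j j‖
          * ‖(ΘDI (Matrix.single j j 1)) i i‖ := by
        apply Finset.sum_le_sum; intro i _
        refine le_trans (norm_sum_le _ _) ?_
        apply Finset.sum_le_sum; intro j _
        rw [norm_mul]
    _ = ∑ j, ‖M j j‖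
          * ∑ i, ((ΘDI (Matrix.single j j 1)) i i).re := by
        rw [Finset.sum_comm]
        apply Finset.sum_congr rfl; intro j _
        rw [Finset.mul_sum]
        apply Finset.sum_congr rfl; intro i _
        rw [abs_eq_re_of_nonneg (choi_diag_nonneg hch i j)]
    _ = ∑ j, ‖M j j‖ := by
        apply Finset.sum_congr rfl; intro j _
        rw [choi_diag_sum hch, mul_one]

theorem choi_diag_le_one {m k : Type*} [Fintype m] [DecidableEq m] [Fintype k] [DecidableEq k]
    {Ψ : SO m k} (hch : IsChannel Ψ) (p : k) (j : m) :
    ((Ψ (Matrix.single j j 1)) p p).re ≤ 1 := by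
  rw [← choi_diag_sum hch j]
  apply Finset.single_le_sum (f := fun i => ((Ψ (Matrix.single j j 1)) i i).re)
  · intro i _
    exact (cnonneg_iff.1 (choi_diag_nonneg hch i j)).1
  · exact Finset.mem_univ p

theorem diag_l1_bound {m k : Type*} [Fintype m] [DecidableEq m] [Fintype k] [DecidableEq k]
    {Ψ : SO m k} (hch : IsChannel Ψ) (X : Matrix m m ℂ) :
    ∑ i, ‖(Ψ X) i i‖ ≤ ∑ j, ∑ l, ‖X j l‖ := by
  calc ∑ i, ‖(Ψ X) i i‖
      ≤ ∑ i, ∑ j, ∑ l, ‖X j l‖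
          * ‖(Ψ (Matrix.single j l 1)) i i‖ := by
        apply Finset.sum_le_sum; intro i _
        rw [chan_expand]
        refine le_trans (norm_sum_le _ _) ?_
        apply Finset.sum_le_sum; intro j _
        refine le_trans (norm_sum_le _ _) ?_
        apply Finset.sum_le_sum; intro l _
        rw [norm_mul]
    _ ≤ ∑ i, ∑ j, ∑ l, ‖X j l‖
          * ((((Ψ (Matrix.single j j 1)) i i).re
            + (((Ψ (Matrix.single l l 1)) i i).re)) / 2) := by
        apply Finset.sum_le_sum; intro i _
        apply Finset.sum_le_sum; intro j _
        apply Finset.sum_le_sum; intro l _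
        exact mul_le_mul_of_nonneg_left (choi_abs_le hch j l i i) (norm_nonneg _)
    _ = ∑ j, ∑ l, ‖X j l‖
          * (((∑ i, ((Ψ (Matrix.single j j 1)) i i).re)
            + (∑ i, ((Ψ (Matrix.single l l 1)) i i).re)) / 2) := by
        rw [Finset.sum_comm]
        apply Finset.sum_congr rfl; intro j _
        rw [Finset.sum_comm]
        apply Finset.sum_congr rfl; intro l _
        rw [← Finset.mul_sum]
        congr 1
        rw [← Finset.sum_div, Finset.sum_add_distrib]
    _ = ∑ j, ∑ l, ‖X j l‖ := by
        apply Finset.sum_congr rfl; intro j _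
        apply Finset.sum_congr rfl; intro l _
        rw [choi_diag_sum hch, choi_diag_sum hch]
        norm_num

theorem entry_abs_bound {m k : Type*} [Fintype m] [DecidableEq m] [Fintype k] [DecidableEq k]
    {Ψ : SO m k} (hch : IsChannel Ψ) (X : Matrix m m ℂ) (p q : k) :
    ‖(Ψ X) p q‖ ≤ ∑ j, ∑ l, ‖X j l‖ := by
  rw [chan_expand]
  refine le_trans (norm_sum_le _ _) ?_
  apply Finset.sum_le_sum; intro j _
  refine le_trans (norm_sum_le _ _) ?_
  apply Finset.sum_le_sum; intro l _
  rw [norm_mul]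
  calc ‖X j l‖ * ‖(Ψ (Matrix.single j l 1)) p q‖
      ≤ ‖X j l‖ * 1 := by
        apply mul_le_mul_of_nonneg_left ?_ (norm_nonneg _)
        refine le_trans (choi_abs_le hch j l p q) ?_
        have h1 := choi_diag_le_one hch p j
        have h2 := choi_diag_le_one hch q l
        linarith
    _ = ‖X j l‖ := mul_one _

theorem trace_deph {ι : Type*} [Fintype ι] [DecidableEq ι] (ρ : Matrix ι ι ℂ) :
    (deph ρ).trace = ρ.trace := by
  unfold Matrix.trace
  apply Finset.sum_congr rfl
  intro i _
  exact deph_apply_diag ρ i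

theorem state_entry_abs_le_one {ι : Type*} [Fintype ι] [DecidableEq ι]
    {ρ : Matrix ι ι ℂ} (hρ : IsState ρ) (u v : ι) : ‖ρ u v‖ ≤ 1 := by
  have hdiag : ∀ w, (ρ w w).re ≤ 1 := by
    intro w
    have htr := congrArg Complex.re hρ.2
    rw [Matrix.trace, Complex.re_sum] at htr
    simp only [Complex.one_re] at htr
    rw [← htr]
    apply Finset.single_le_sum (f := fun i => (ρ.diag i).re) ?_ (Finset.mem_univ w)
    intro i _
    exact (cnonneg_iff.1 (psd_diag_nonneg hρ.1 i)).1
  refine le_trans (psd_abs_le hρ.1 u v) ?_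
  have := hdiag u; have := hdiag v
  linarith

theorem diffOp_entry_bound {ι : Type*} [Fintype ι] [DecidableEq ι]
    (lam : ℝ) (hlam : lam ∈ Set.Icc (0:ℝ) 1) (φ : ι → ℝ)
    {ρ : Matrix ι ι ℂ} (hρ : IsState ρ) (u v : ι) :
    ‖(diffOp lam φ ρ) u v‖ ≤ 1 := by
  have hval : (diffOp lam φ ρ) u v
      = (lam : ℂ) * ρ u v - ((1 - lam : ℝ) : ℂ)
        * (Complex.exp (Complex.I * ((φ u : ℂ) - (φ v : ℂ))) * ρ u v) := by
    simp [diffOp, phaseCh, Matrix.sub_apply, Matrix.smul_apply, smul_eq_mul]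
  rw [hval]
  have hexp : ‖Complex.exp (Complex.I * ((φ u : ℂ) - (φ v : ℂ)))‖ = 1 := by
    rw [Complex.norm_exp]
    simp [Complex.mul_re]
  refine le_trans (norm_sub_le _ _) ?_
  rw [norm_mul, norm_mul, norm_mul, hexp]
  have h1 := state_entry_abs_le_one hρ u v
  have habs := norm_nonneg (ρ u v)
  rw [Complex.norm_real, Complex.norm_real, Real.norm_eq_abs, Real.norm_eq_abs]
  rw [_root_.abs_of_nonneg hlam.1, _root_.abs_of_nonneg (by linarith [hlam.2] : (0:ℝ) ≤ 1 - lam)]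
  nlinarith [hlam.1, hlam.2]

/-- The completely depolarizing channel: `ρ ↦ (tr ρ) • (1/n) I`. -/
noncomputable def depolCh (α β : Type*) [Fintype α] [DecidableEq α] [Fintype β] [DecidableEq β] :
    SO α β where
  toFun ρ := ρ.trace • (((Fintype.card β : ℝ)⁻¹ : ℂ) • (1 : Matrix β β ℂ))
  map_add' := by
    intro x y
    rw [Matrix.trace_add, add_smul]
  map_smul' := by
    intro c x
    rw [Matrix.trace_smul, smul_eq_mul, RingHom.id_apply, ← smul_smul]

theorem depolCh_isChannel (α β : Type*) [Fintype α] [DecidableEq α] [Fintype β] [DecidableEq β]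
    [Nonempty β] : IsChannel (depolCh α β) := by
  have hn : (Fintype.card β : ℂ) ≠ 0 := by
    simp [Fintype.card_ne_zero]
  constructor
  · have hc : choi (depolCh α β) = Matrix.diagonal
        (fun _ : β × α => (((Fintype.card β : ℝ)⁻¹ : ℝ) : ℂ)) := by
      ext ⟨p1, p2⟩ ⟨q1, q2⟩
      simp only [choi, depolCh, Matrix.of_apply, LinearMap.coe_mk, AddHom.coe_mk,
        Matrix.smul_apply, Matrix.one_apply, Matrix.diagonal_apply, Prod.mk.injEq,
        smul_eq_mul]
      have htr : (Matrix.single p2 q2 (1:ℂ)).trace = if p2 = q2 then 1 else 0 := by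
        by_cases h : p2 = q2
        · subst h; simp [Matrix.trace, Matrix.diag, Matrix.single, Finset.sum_ite_eq]
        · simp only [Matrix.trace, Matrix.diag, Matrix.single, Matrix.of_apply, h,
            if_false]
          rw [Finset.sum_eq_zero]
          intro b _
          rw [if_neg (by rintro ⟨rfl, rfl⟩; exact h rfl)]
      rw [htr]
      by_cases h1 : p1 = q1 <;> by_cases h2 : p2 = q2 <;> simp [h1, h2]
    rw [hc]
    apply Matrix.PosSemidef.diagonal
    intro _
    simp only [Pi.zero_apply]
    rw [cnonneg_iff]
    constructor
    · simp only [Complex.ofReal_re]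
      positivity
    · simp
  · intro ρ
    show (ρ.trace • (((Fintype.card β : ℝ)⁻¹ : ℂ) • (1 : Matrix β β ℂ))).trace = ρ.trace
    rw [Matrix.trace_smul, Matrix.trace_smul]
    simp only [smul_eq_mul, Matrix.trace_one]
    push_cast
    field_simp

theorem depolCh_isDI (α β : Type*) [Fintype α] [DecidableEq α] [Fintype β] [DecidableEq β] :
    IsDI (depolCh α β) := by
  unfold IsDI
  apply LinearMap.ext
  intro ρ
  simp only [LinearMap.comp_apply]
  congr 1
  simp only [depolCh, LinearMap.coe_mk, AddHom.coe_mk]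
  rw [trace_deph]

theorem unifState_isState (α : Type*) [Fintype α] [DecidableEq α] [Nonempty α] :
    IsState (Matrix.diagonal (fun _ : α => (((Fintype.card α : ℝ)⁻¹ : ℝ) : ℂ))) := by
  constructor
  · apply Matrix.PosSemidef.diagonal
    intro _
    simp only [Pi.zero_apply]
    rw [cnonneg_iff]
    refine ⟨by simp only [Complex.ofReal_re]; positivity, by simp⟩
  · rw [Matrix.trace_diagonal]
    rw [Finset.sum_const, Finset.card_univ]
    have hn : (Fintype.card α : ℂ) ≠ 0 := by simp [Fintype.card_ne_zero]
    rw [nsmul_eq_mul]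
    push_cast
    field_simp
end Aux

/-- monotonicity under left composition with detection incoherent channels. -/
theorem Mpre_left_monotone {α β γ δ : Type*} [Fintype α] [DecidableEq α] [Nonempty α]
    [Fintype β] [DecidableEq β] [Nonempty β] [Fintype γ] [DecidableEq γ] [Nonempty γ]
    [Fintype δ] [DecidableEq δ] [Nonempty δ]
    (lam : ℝ) (hlam : lam ∈ Set.Icc (0 : ℝ) 1) (φ : α → ℝ)
    (Θ : SO β γ) (hΘ : IsChannel Θ)
    (ΘDI : SO γ δ) (hΘDI : IsChannel ΘDI) (hDI : IsDI ΘDI) :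
    Mpre lam φ (ΘDI ∘ₗ Θ) ≤ Mpre lam φ Θ := by
  unfold Mpre
  apply sub_le_sub_right
  set S₁ : Set ℝ := {x : ℝ | ∃ (Φ : SO α β) (ρ : Matrix α α ℂ), IsChannel Φ ∧ IsDI Φ ∧
    IsState ρ ∧ x = traceNorm (deph ((ΘDI ∘ₗ Θ) (Φ (diffOp lam φ ρ))))} with hS₁
  set S₂ : Set ℝ := {x : ℝ | ∃ (Φ : SO α β) (ρ : Matrix α α ℂ), IsChannel Φ ∧ IsDI Φ ∧
    IsState ρ ∧ x = traceNorm (deph (Θ (Φ (diffOp lam φ ρ))))} with hS₂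
  -- S₂ is bounded above
  have hbdd : BddAbove S₂ := by
    refine ⟨(Fintype.card γ : ℝ) * ((Fintype.card β : ℝ)^2 * ((Fintype.card α : ℝ)^2 * 1)), ?_⟩
    rintro x ⟨Φ, ρ, hΦ, hΦDI, hρ, rfl⟩
    rw [traceNorm_deph]
    calc ∑ i, ‖(Θ (Φ (diffOp lam φ ρ))) i i‖
        ≤ ∑ j, ∑ l, ‖(Φ (diffOp lam φ ρ)) j l‖ := diag_l1_bound hΘ _
      _ ≤ ∑ _j : β, ∑ _l : β, ∑ u : α, ∑ v : α, ‖(diffOp lam φ ρ) u v‖ := by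
          apply Finset.sum_le_sum; intro j _
          apply Finset.sum_le_sum; intro l _
          exact entry_abs_bound hΦ _ j l
      _ ≤ ∑ _j : β, ∑ _l : β, ∑ _u : α, ∑ _v : α, (1:ℝ) := by
          apply Finset.sum_le_sum; intro j _
          apply Finset.sum_le_sum; intro l _
          apply Finset.sum_le_sum; intro u _
          apply Finset.sum_le_sum; intro v _
          exact diffOp_entry_bound lam hlam φ hρ u v
      _ ≤ (Fintype.card γ : ℝ) * ((Fintype.card β : ℝ)^2 * ((Fintype.card α : ℝ)^2 * 1)) := by
          simp only [Finset.sum_const, Finset.card_univ, nsmul_eq_mul, mul_one]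
          have h1 : (1:ℝ) ≤ (Fintype.card γ : ℝ) := by
            exact_mod_cast Nat.one_le_iff_ne_zero.2 Fintype.card_ne_zero
          nlinarith [sq_nonneg ((Fintype.card β : ℝ) * (Fintype.card α : ℝ))]
  -- S₁ is nonempty
  have hne : S₁.Nonempty := by
    refine ⟨_, depolCh α β, Matrix.diagonal (fun _ : α => (((Fintype.card α : ℝ)⁻¹ : ℝ) : ℂ)),
      depolCh_isChannel α β, depolCh_isDI α β, unifState_isState α, rfl⟩
  apply csSup_le hne
  rintro x ⟨Φ, ρ, hΦ, hΦDI, hρ, rfl⟩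
  have key : traceNorm (deph ((ΘDI ∘ₗ Θ) (Φ (diffOp lam φ ρ))))
      ≤ traceNorm (deph (Θ (Φ (diffOp lam φ ρ)))) := by
    rw [traceNorm_deph, traceNorm_deph, LinearMap.comp_apply]
    exact diag_contraction hΘDI hDI _
  exact le_trans key (le_csSup hbdd ⟨Φ, ρ, hΦ, hΦDI, hρ, rfl⟩)
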